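/- Let G be a group and F ⊆ G' two families of subgroups of G. Let ℓ¹₀(G/F) be the normed ℝG-module of summable functions f : G/F → ℝ (finite ℓ¹-norm Σ_{x∈G/F} |f(x)|) whose total sum Σ_{x∈G/F} f(x) is zero, with action (g·f)(x) = f(g⁻¹·x). Define the cocycle K_F : (G/F)² → ℓ¹₀(G/F) by K_F(x,y) = χ_y − χ_x, where χ_x is the characteristic function of the point x. Suppose there exist a bounded G-equivariant function c : (G/G')² → ℓ¹₀(G/F) with δ¹c = 0 and a bounded G-equivariant function b : G/F → ℓ¹₀(G/F) such that the restriction of c to (G/F)² equals K_F + δ⁰b. Then every subgroup H ∈ G' is finite relative to the family F|_H = {L ∩ H : L ∈ F}, i.e. F|_H contains a subgroup of finite index in H. -/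

import Mathlib

open scoped BigOperators

universe u v w

namespace RelBdd

variable {G : Type u} [Group G]

/-- `F` is a family of subgroups of `G`: nonempty, closed under conjugation and
closed under taking subgroups. -/
def IsFamily (F : Set (Subgroup G)) : Prop :=
  F.Nonempty ∧
    (∀ H ∈ F, ∀ g : G, Subgroup.map ((MulAut.conj g).toMonoidHom) H ∈ F) ∧
    ∀ H ∈ F, ∀ K : Subgroup G, K ≤ H → K ∈ F

/-- The `G`-set `G/F = ⨿_{H ∈ F} G/H`. -/
abbrev Cos (G : Type u) [Group G] (F : Set (Subgroup G)) : Type u :=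
  Σ H : F, G ⧸ (H : Subgroup G)

instance (F : Set (Subgroup G)) : SMul G (Cos G F) :=
  ⟨fun g x => ⟨x.1, g • x.2⟩⟩

instance (F : Set (Subgroup G)) : MulAction G (Cos G F) where
  one_smul := by
    rintro ⟨H, q⟩
    show (⟨H, (1 : G) • q⟩ : Cos G F) = ⟨H, q⟩
    rw [one_smul]
  mul_smul g h := by
    rintro ⟨H, q⟩
    show (⟨H, (g * h) • q⟩ : Cos G F) = ⟨H, g • h • q⟩
    rw [mul_smul]

/-- A function into a normed space is bounded. -/
def Bdd {α : Type*} {V : Type*} [Norm V] (f : α → V) : Prop :=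
  ∃ C : ℝ, ∀ x, ‖f x‖ ≤ C

/-- The simplicial coboundary operator on `V`-valued cochains on a set `S`. -/
def delta {S : Type*} {V : Type*} [AddCommGroup V] [Module ℝ V] (n : ℕ)
    (f : (Fin (n + 1) → S) → V) : (Fin (n + 2) → S) → V :=
  fun x => ∑ i : Fin (n + 2), ((-1 : ℝ) ^ (i : ℕ)) • f (fun j => x (i.succAbove j))

/-- `ℓ∞(S)`: the space of bounded real valued functions on `S`. -/
def Linf (S : Type v) : Submodule ℝ (S → ℝ) where
  carrier := {f | ∃ C : ℝ, ∀ s, |f s| ≤ C}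
  add_mem' := by
    rintro f g ⟨C, hC⟩ ⟨D, hD⟩
    exact ⟨C + D, fun s => (abs_add_le _ _).trans (add_le_add (hC s) (hD s))⟩
  zero_mem' := ⟨0, fun s => by simp⟩
  smul_mem' := by
    rintro r f ⟨C, hC⟩
    refine ⟨|r| * C, fun s => ?_⟩
    show |r * f s| ≤ |r| * C
    rw [abs_mul]
    exact mul_le_mul_of_nonneg_left (hC s) (abs_nonneg r)

/-- The constant function `r` as an element of `ℓ∞(S)`. -/
def constLinf (S : Type v) (r : ℝ) : Linf S :=
  ⟨fun _ => r, ⟨|r|, fun _ => le_rfl⟩⟩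

/-- Precomposition with a map `φ : S → S` as a linear endomorphism of `ℓ∞(S)`. -/
def compL {S : Type v} (φ : S → S) : Linf S →ₗ[ℝ] Linf S where
  toFun f := ⟨fun s => (f : S → ℝ) (φ s), by
    obtain ⟨C, hC⟩ := f.2
    exact ⟨C, fun s => hC (φ s)⟩⟩
  map_add' f g := by ext s; rfl
  map_smul' r f := by ext s; rfl

/-- There exists a `K`-invariant mean on the `K`-set `S`. -/
def InvariantMean (K : Type u) (S : Type v) [Group K] [MulAction K S] : Prop :=
  ∃ m : Linf S →ₗ[ℝ] ℝ,
    m (constLinf S 1) = 1 ∧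
    (∀ f : Linf S, (∀ s, 0 ≤ (f : S → ℝ) s) → 0 ≤ m f) ∧
    ∀ (g : K) (f : Linf S), m (compL (fun s => g⁻¹ • s) f) = m f

/-- The restriction `F|_H = {L ∩ H : L ∈ F}` of a collection of subgroups of `G` to
a collection of subgroups of `H`. -/
def restrictedFamily (F : Set (Subgroup G)) (H : Subgroup G) : Set (Subgroup H) :=
  {K | ∃ L ∈ F, K = L.subgroupOf H}

/-- `K` is amenable relative to the collection `𝒦` of its subgroups: the `K`-set
`⨿_{L ∈ 𝒦} K/L` admits a `K`-invariant mean. -/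
def RelativelyAmenable (K : Type u) [Group K] (𝒦 : Set (Subgroup K)) : Prop :=
  InvariantMean K (Cos K 𝒦)

/-- The family generated by a set `ℋ` of subgroups: all subgroups of conjugates of
members of `ℋ`, together with the trivial subgroup. -/
def famGen (ℋ : Set (Subgroup G)) : Set (Subgroup G) :=
  {K | K = ⊥ ∨ ∃ H ∈ ℋ, ∃ g : G, ∀ x ∈ K, g⁻¹ * x * g ∈ H}

/-- The left multiplication action of `g ∈ G` on a normed `ℝG`-module `W`, as a
continuous linear map. -/
def smulCLM {W : Type w} [NormedAddCommGroup W] [NormedSpace ℝ W] [DistribMulAction G W]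
    [SMulCommClass G ℝ W] (hW : ∀ (g : G) (w : W), ‖g • w‖ = ‖w‖) (g : G) : W →L[ℝ] W :=
  LinearMap.mkContinuous
    { toFun := fun w => g • w
      map_add' := fun a b => smul_add g a b
      map_smul' := fun r w => smul_comm g r w }
    1 (fun w => by simp [hW])

section Statement19

/-- `ℓ¹₀(S)`: the submodule of `ℓ¹(S)` of summable real valued functions on `S`
whose total sum is zero. -/
noncomputable def l1zero (S : Type v) : Submodule ℝ (lp (fun _ : S => ℝ) 1) where
  carrier := {f | HasSum (⇑f) 0}
  zero_mem' := by
    show HasSum (⇑(0 : lp (fun _ : S => ℝ) 1)) 0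
    rw [lp.coeFn_zero]; exact hasSum_zero
  add_mem' := by
    intro f g hf hg
    show HasSum (⇑(f + g)) 0
    rw [lp.coeFn_add]; have h := hf.add hg; rw [add_zero] at h; exact h
  smul_mem' := by
    intro r f hf
    show HasSum (⇑(r • f)) 0
    rw [lp.coeFn_smul]; have h := hf.const_smul r; rw [smul_zero] at h; exact h

/-- The characteristic function of a point, as an element of `ℓ¹₀`'s ambient `ℓ¹`. -/
noncomputable def chiFun (S : Type v) (s : S) : lp (fun _ : S => ℝ) 1 :=
  letI := Classical.decEq S
  lp.single 1 s (1 : ℝ)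

lemma chiFun_hasSum (S : Type v) (s : S) : HasSum (⇑(chiFun S s)) 1 := by
  classical
  have h : ⇑(chiFun S s) = fun j => if j = s then (1 : ℝ) else 0 := by
    funext j
    by_cases h : j = s
    · subst h
      simp [chiFun, lp.single_apply_self]
    · simp [chiFun, lp.single_apply_ne _ _ _ h, h]
  rw [h]
  exact hasSum_ite_eq s 1

/-- The cocycle `K_F(x₀,x₁) = χ_{x₁} - χ_{x₀}` with values in `ℓ¹₀(S)`. -/
noncomputable def kfCocycle (S : Type v) (x : Fin 2 → S) : l1zero S :=
  ⟨chiFun S (x 1) - chiFun S (x 0), by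
    show HasSum (⇑(chiFun S (x 1) - chiFun S (x 0))) 0
    rw [lp.coeFn_sub]
    have h := (chiFun_hasSum S (x 1)).sub (chiFun_hasSum S (x 0)); rw [sub_self] at h; exact h⟩

variable {G : Type u} [Group G]

/-- The `G`-action `(g • f) s = f (g⁻¹ • s)` on `ℓ¹(S)` for a `G`-set `S`. -/
noncomputable def shiftLp {S : Type v} [MulAction G S] (g : G)
    (f : lp (fun _ : S => ℝ) 1) : lp (fun _ : S => ℝ) 1 :=
  ⟨fun s => f (g⁻¹ • s), by
    apply memℓp_gen
    exact (Equiv.summable_iff (MulAction.toPerm g⁻¹ : Equiv.Perm S)).mpr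
      ((lp.memℓp f).summable (by norm_num))⟩

/-- The `G`-action `(g • f) s = f (g⁻¹ • s)` on `ℓ¹₀(S)` for a `G`-set `S`. -/
noncomputable def shiftL10 {S : Type v} [MulAction G S] (g : G)
    (f : l1zero S) : l1zero S :=
  ⟨shiftLp g f.1, (Equiv.hasSum_iff (MulAction.toPerm (g⁻¹ : G) : Equiv.Perm S)).mpr f.2⟩

/-- The inclusion of `G`-sets `G/F ⊆ G/G'` for families `F ⊆ G'`. -/
def inclCos {F F' : Set (Subgroup G)} (h : F ⊆ F') :
    Cos G F → Cos G F' :=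
  fun x => ⟨⟨(x.1 : Subgroup G), h x.1.2⟩, x.2⟩

section AuxHelpers

lemma delta1_eval {S : Type*} {V : Type*} [AddCommGroup V] [Module ℝ V]
    (f : (Fin 2 → S) → V) (a b c : S) :
    delta 1 f ![a,b,c] = f ![b,c] - f ![a,c] + f ![a,b] := by
  have h0 : (fun j => (![a,b,c]) ((0:Fin 3).succAbove j)) = ![b,c] := by
    funext j; fin_cases j <;> rfl
  have h1 : (fun j => (![a,b,c]) ((1:Fin 3).succAbove j)) = ![a,c] := by
    funext j; fin_cases j <;> rfl
  have h2 : (fun j => (![a,b,c]) ((2:Fin 3).succAbove j)) = ![a,b] := by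
    funext j; fin_cases j <;> rfl
  show (∑ i : Fin 3, ((-1 : ℝ) ^ (i : ℕ)) • f (fun j => (![a,b,c]) (i.succAbove j))) = _
  rw [Fin.sum_univ_three, h0, h1, h2]
  norm_num
  abel

lemma delta0_eval {S : Type*} {V : Type*} [AddCommGroup V] [Module ℝ V]
    (f : (Fin 1 → S) → V) (a b : S) :
    delta 0 f ![a,b] = f (fun _ => b) - f (fun _ => a) := by
  have h0 : (fun j : Fin 1 => (![a,b]) ((0:Fin 2).succAbove j)) = fun _ => b := by
    funext j; fin_cases j <;> rfl
  have h1 : (fun j : Fin 1 => (![a,b]) ((1:Fin 2).succAbove j)) = fun _ => a := by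
    funext j; fin_cases j <;> rfl
  show (∑ i : Fin 2, ((-1 : ℝ) ^ (i : ℕ)) • f (fun j => (![a,b]) (i.succAbove j))) = _
  rw [Fin.sum_univ_two, h0, h1]
  norm_num
  abel

variable {G : Type u} [Group G]

lemma chiFun_apply_self (S : Type v) (s : S) : (chiFun S s) s = 1 := by
  classical
  simp [chiFun, lp.single_apply_self]

lemma chiFun_apply_ne (S : Type v) {s j : S} (h : j ≠ s) : (chiFun S s) j = 0 := by
  classical
  simp [chiFun, lp.single_apply_ne _ _ _ h, Pi.single_apply, h]

lemma shift_chi {S : Type v} [MulAction G S] (g : G) (x : S) :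
    shiftLp g (chiFun S x) = chiFun S (g • x) := by
  apply Subtype.ext
  funext s
  show (chiFun S x) (g⁻¹ • s) = (chiFun S (g • x)) s
  by_cases h : s = g • x
  · subst h
    rw [chiFun_apply_self, inv_smul_smul, chiFun_apply_self]
  · rw [chiFun_apply_ne S h, chiFun_apply_ne S]
    intro hc
    exact h (by rw [← hc, smul_inv_smul])

lemma shiftLp_add {S : Type v} [MulAction G S] (g : G) (f₁ f₂ : lp (fun _ : S => ℝ) 1) :
    shiftLp g (f₁ + f₂) = shiftLp g f₁ + shiftLp g f₂ := by
  apply Subtype.ext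
  funext s
  show (⇑(f₁ + f₂)) (g⁻¹ • s) = (⇑(shiftLp g f₁ + shiftLp g f₂)) s
  rw [lp.coeFn_add, lp.coeFn_add]
  rfl

lemma shiftLp_sub {S : Type v} [MulAction G S] (g : G) (f₁ f₂ : lp (fun _ : S => ℝ) 1) :
    shiftLp g (f₁ - f₂) = shiftLp g f₁ - shiftLp g f₂ := by
  apply Subtype.ext
  funext s
  show (⇑(f₁ - f₂)) (g⁻¹ • s) = (⇑(shiftLp g f₁ - shiftLp g f₂)) s
  rw [lp.coeFn_sub, lp.coeFn_sub]
  rfl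

end AuxHelpers

/-- Theorem 4.10, (iv) ⇒ (i).  Let `F ⊆ G'` be families of
subgroups of `G`.  If the class `[K_F] ∈ H¹_{F,b}(G; ℓ¹₀(G/F))` lies in the image of
the canonical map `H¹_{G',b}(G; ℓ¹₀(G/F)) → H¹_{F,b}(G; ℓ¹₀(G/F))` — i.e. there are
a bounded `G`-equivariant cocycle `c` on `(G/G')²` and a bounded `G`-equivariant `b`
on `G/F` with `c|_{(G/F)²} = K_F + δ⁰b` — then every `H ∈ G'` is finite relative to
`F|_H`, i.e. `F|_H` contains a finite index subgroup of `H`. -/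
theorem kf_class_implies_relatively_finite
    (F F' : Set (Subgroup G)) (hF : IsFamily F) (hF' : IsFamily F') (hFF' : F ⊆ F')
    (c : (Fin 2 → Cos G F') → l1zero (Cos G F))
    (hcbdd : Bdd c)
    (hcequiv : ∀ (g : G) (x : Fin 2 → Cos G F'),
      c (fun j => g • x j) = shiftL10 g (c x))
    (hccocycle : delta 1 c = 0)
    (b : (Fin 1 → Cos G F) → l1zero (Cos G F))
    (hbbdd : Bdd b)
    (hbequiv : ∀ (g : G) (x : Fin 1 → Cos G F),
      b (fun j => g • x j) = shiftL10 g (b x))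
    (hrestr : ∀ x : Fin 2 → Cos G F,
      c (fun j => inclCos hFF' (x j)) = kfCocycle (Cos G F) x + delta 0 b x) :
    ∀ H : Subgroup G, H ∈ F' → ∃ L ∈ F, (L.subgroupOf H).FiniteIndex := by
  classical
  intro H hH
  obtain ⟨L₀, hL₀⟩ := hF.1
  set p : Cos G F' := ⟨⟨H, hH⟩, QuotientGroup.mk 1⟩ with hpdef
  -- the function x ↦ χ_x + b(x) - c(p, incl x) is constant
  have hconst : ∀ x y : Cos G F,
      chiFun (Cos G F) y + ↑(b fun _ => y) - ↑(c ![p, inclCos hFF' y])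
        = chiFun (Cos G F) x + ↑(b fun _ => x) - ↑(c ![p, inclCos hFF' x]) := by
    intro x y
    have hco := congrFun hccocycle ![p, inclCos hFF' x, inclCos hFF' y]
    rw [delta1_eval] at hco
    simp only [Pi.zero_apply] at hco
    have harg : (fun j => inclCos hFF' (![x, y] j)) = ![inclCos hFF' x, inclCos hFF' y] := by
      funext j; fin_cases j <;> rfl
    have hre := hrestr ![x, y]
    rw [harg, delta0_eval] at hre
    have hA : c ![inclCos hFF' x, inclCos hFF' y]
        = c ![p, inclCos hFF' y] - c ![p, inclCos hFF' x] := by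
      have h2 : c ![inclCos hFF' x, inclCos hFF' y]
          - (c ![p, inclCos hFF' y] - c ![p, inclCos hFF' x]) = 0 := by
        rw [← hco]; abel
      exact sub_eq_zero.mp h2
    have key : c ![p, inclCos hFF' y] - c ![p, inclCos hFF' x]
        = kfCocycle (Cos G F) ![x, y] + (b (fun _ => y) - b (fun _ => x)) := by
      rw [← hA, hre]
    have keyv := congrArg (Subtype.val) key
    push_cast at keyv
    have hkv : (kfCocycle (Cos G F) ![x, y] : lp (fun _ : Cos G F => ℝ) 1)
        = chiFun (Cos G F) y - chiFun (Cos G F) x := rfl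
    rw [hkv] at keyv
    have h3 : (chiFun (Cos G F) y + ↑(b fun _ => y) - ↑(c ![p, inclCos hFF' y]))
        - (chiFun (Cos G F) x + ↑(b fun _ => x) - ↑(c ![p, inclCos hFF' x]))
        = ((chiFun (Cos G F) y - chiFun (Cos G F) x)
            + ((↑(b fun _ => y) : lp (fun _ : Cos G F => ℝ) 1) - ↑(b fun _ => x)))
          - ((↑(c ![p, inclCos hFF' y]) : lp (fun _ : Cos G F => ℝ) 1)
              - (↑(c ![p, inclCos hFF' x]) : lp (fun _ : Cos G F => ℝ) 1)) := by abel
    rw [← keyv, sub_self] at h3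
    exact sub_eq_zero.mp h3
  -- p is fixed by H
  have hp : ∀ h : G, h ∈ H → h • p = p := by
    intro h hh
    have h2 : (h • (QuotientGroup.mk 1 : G ⧸ H)) = QuotientGroup.mk 1 := by
      show (QuotientGroup.mk (h * 1) : G ⧸ H) = QuotientGroup.mk 1
      rw [QuotientGroup.eq]
      simpa using inv_mem hh
    rw [hpdef]
    show (⟨⟨H, hH⟩, h • (QuotientGroup.mk 1 : G ⧸ H)⟩ : Cos G F')
      = ⟨⟨H, hH⟩, QuotientGroup.mk 1⟩
    rw [h2]
  -- equivariance
  have hequiv : ∀ h : G, h ∈ H → ∀ x : Cos G F,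
      chiFun (Cos G F) (h • x) + (↑(b fun _ => h • x) : lp (fun _ : Cos G F => ℝ) 1)
          - (↑(c ![p, inclCos hFF' (h • x)]) : lp (fun _ : Cos G F => ℝ) 1)
        = shiftLp h (chiFun (Cos G F) x + (↑(b fun _ => x) : lp (fun _ : Cos G F => ℝ) 1)
          - (↑(c ![p, inclCos hFF' x]) : lp (fun _ : Cos G F => ℝ) 1)) := by
    intro h hh x
    have hb : b (fun _ : Fin 1 => h • x) = shiftL10 h (b fun _ => x) := hbequiv h (fun _ => x)
    have harg : (fun j => h • (![p, inclCos hFF' x] j)) = ![p, inclCos hFF' (h • x)] := by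
      funext j
      fin_cases j
      · exact hp h hh
      · rfl
    have hc : c ![p, inclCos hFF' (h • x)] = shiftL10 h (c ![p, inclCos hFF' x]) := by
      rw [← harg]; exact hcequiv h ![p, inclCos hFF' x]
    rw [shiftLp_sub, shiftLp_add, shift_chi, hb, hc]
    rfl
  set x₀ : Cos G F := ⟨⟨L₀, hL₀⟩, QuotientGroup.mk 1⟩ with hx₀
  set ν : lp (fun _ : Cos G F => ℝ) 1 :=
    chiFun (Cos G F) x₀ + (↑(b fun _ => x₀) : lp (fun _ : Cos G F => ℝ) 1)
      - (↑(c ![p, inclCos hFF' x₀]) : lp (fun _ : Cos G F => ℝ) 1) with hν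
  have hsum : HasSum (⇑ν) 1 := by
    have h1 := chiFun_hasSum (Cos G F) x₀
    have h2 : HasSum (⇑((b fun _ => x₀ : l1zero (Cos G F)) : lp (fun _ : Cos G F => ℝ) 1)) 0 :=
      (b fun _ => x₀).2
    have h3 : HasSum (⇑((c ![p, inclCos hFF' x₀] : l1zero (Cos G F))
        : lp (fun _ : Cos G F => ℝ) 1)) 0 := (c ![p, inclCos hFF' x₀]).2
    have h4 := (h1.add h2).sub h3
    have hcoe : ⇑ν = fun t => chiFun (Cos G F) x₀ t
        + (↑(b fun _ => x₀ : l1zero (Cos G F)) : lp (fun _ : Cos G F => ℝ) 1) t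
        - (↑(c ![p, inclCos hFF' x₀] : l1zero (Cos G F)) : lp (fun _ : Cos G F => ℝ) 1) t := by
      rw [hν]; funext t; rw [lp.coeFn_sub, lp.coeFn_add]; rfl
    rw [hcoe]
    simpa using h4
  have hshift : ∀ h : G, h ∈ H → shiftLp h ν = ν := by
    intro h hh
    rw [hν, ← hequiv h hh x₀]
    exact hconst x₀ (h • x₀)
  have hinv : ∀ h : G, h ∈ H → ∀ t : Cos G F, ⇑ν (h • t) = ⇑ν t := by
    intro h hh t
    have h2 := congrFun (congrArg (Subtype.val) (hshift h⁻¹ (inv_mem hh))) t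
    simpa [shiftLp] using h2
  obtain ⟨s, hs⟩ : ∃ t : Cos G F, ⇑ν t ≠ 0 := by
    by_contra hall
    push_neg at hall
    have h0 : HasSum (⇑ν) 0 := by
      have : ⇑ν = fun _ => 0 := funext hall
      rw [this]; exact hasSum_zero
    exact one_ne_zero (hsum.unique h0)
  have hsummable : Summable (fun t : Cos G F => ‖⇑ν t‖) := by
    have := (lp.memℓp ν).summable (by norm_num)
    simpa using this
  have hpos : 0 < ‖⇑ν s‖ := norm_pos_iff.mpr hs
  have hev : ∀ᶠ t in Filter.cofinite, ‖⇑ν t‖ < ‖⇑ν s‖ :=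
    hsummable.tendsto_cofinite_zero.eventually_lt_const hpos
  have hfin : {t : Cos G F | ¬ ‖⇑ν t‖ < ‖⇑ν s‖}.Finite := Filter.eventually_cofinite.mp hev
  have horb : (MulAction.orbit (↥H) s).Finite := by
    apply hfin.subset
    rintro t ⟨h, rfl⟩
    have he : ⇑ν ((h : G) • s) = ⇑ν s := hinv (h : G) h.2 s
    simp only [Set.mem_setOf_eq]
    rw [show (h • s : Cos G F) = (h : G) • s from rfl, he]
    exact lt_irrefl _
  have hofin : Finite (MulAction.orbit (↥H) s) := horb.to_subtype
  have hqfin : Finite (↥H ⧸ MulAction.stabilizer (↥H) s) :=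
    (MulAction.orbitEquivQuotientStabilizer (↥H) s).finite_iff.mp hofin
  have hstab : (MulAction.stabilizer (↥H) s).FiniteIndex :=
    Subgroup.finiteIndex_of_finite_quotient
  clear hs hpos hev hfin horb hofin hqfin hinv hshift hsum
  obtain ⟨⟨L, hL⟩, q⟩ := s
  obtain ⟨g₀, rfl⟩ := QuotientGroup.mk_surjective q
  refine ⟨Subgroup.map (MulAut.conj g₀).toMonoidHom L, hF.2.1 L hL g₀, ?_⟩
  have heq : (Subgroup.map (MulAut.conj g₀).toMonoidHom L).subgroupOf H
      = MulAction.stabilizer (↥H) (⟨⟨L, hL⟩, QuotientGroup.mk g₀⟩ : Cos G F) := by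
    ext hh
    rw [Subgroup.mem_subgroupOf, Subgroup.mem_map_equiv, MulAction.mem_stabilizer_iff]
    have hsm : (hh • (⟨⟨L, hL⟩, QuotientGroup.mk g₀⟩ : Cos G F))
        = ⟨⟨L, hL⟩, QuotientGroup.mk ((hh : G) * g₀)⟩ := rfl
    rw [MulAut.conj_symm_apply]
    change _ ↔ (⟨⟨L, hL⟩, QuotientGroup.mk ((hh : G) * g₀)⟩ : Cos G F) = _
    rw [Sigma.ext_iff]
    simp only [heq_eq_eq, true_and]
    rw [QuotientGroup.eq]
    have hgrp : ((hh : G) * g₀)⁻¹ * g₀ = (g₀⁻¹ * (hh : G) * g₀)⁻¹ := by group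
    rw [hgrp, inv_mem_iff]
  rw [heq]
  exact hstab


end Statement19


end RelBdd
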